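/- Let F : C ⥤ X be a faithful essential localization, with right adjoint G (unit η) and left adjoint H (counit θ of the adjunction H ⊣ F). Then for every object C of C, the unit component η_C : C ⟶ GF(C) and the counit component θ_C : HF(C) ⟶ C are bimorphisms, i.e., they are both monomorphisms and epimorphisms. -/

import Mathlib

open CategoryTheory Limits

/-- For a faithful essential localization `F : C ⥤ X` (an adjunction `F ⊣ G` with `F`
faithful and preserving finite limits, `G` fully faithful, and a further left adjoint
`H ⊣ F`), every unit component `η_C : C ⟶ GF(C)` and every counit component
`θ_C : HF(C) ⟶ C` is a bimorphism, i.e. both a monomorphism and an epimorphism. -/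
theorem unit_counit_bimorphism_of_faithful_essentialLocalization
    {C : Type*} [Category C] {X : Type*} [Category X]
    [HasFiniteLimits C] [HasFiniteLimits X]
    (F : C ⥤ X) (G : X ⥤ C) (H : X ⥤ C)
    (adj : F ⊣ G) [PreservesFiniteLimits F] [F.Faithful] [G.Full] [G.Faithful]
    (adj' : H ⊣ F) (c : C) :
    (Mono (adj.unit.app c) ∧ Epi (adj.unit.app c)) ∧
      (Mono (adj'.counit.app c) ∧ Epi (adj'.counit.app c)) := by
  -- the counit of `F ⊣ G` is an iso since `G` is fully faithful
  haveI hε : IsIso adj.counit := inferInstance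
  -- hence the unit of `H ⊣ F` is an iso (adjoint triple)
  haveI hη' : IsIso adj'.unit := by
    rw [(Adjunction.Triple.mk adj' adj).isIso_unit_iff_isIso_counit]; exact hε
  -- `F (η_c)` is an iso by the triangle identity for `F ⊣ G`
  have h1 : F.map (adj.unit.app c) ≫ adj.counit.app (F.obj c) = 𝟙 (F.obj c) :=
    adj.left_triangle_components c
  have hFη : IsIso (F.map (adj.unit.app c)) := by
    haveI : IsIso (adj.counit.app (F.obj c)) := inferInstance
    haveI : IsIso (F.map (adj.unit.app c) ≫ adj.counit.app (F.obj c)) := by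
      rw [h1]; exact IsIso.id _
    exact IsIso.of_isIso_comp_right _ (adj.counit.app (F.obj c))
  -- `F (θ_c)` is an iso by the triangle identity for `H ⊣ F`
  have h2 : adj'.unit.app (F.obj c) ≫ F.map (adj'.counit.app c) = 𝟙 (F.obj c) :=
    adj'.right_triangle_components c
  have hFθ : IsIso (F.map (adj'.counit.app c)) := by
    haveI : IsIso (adj'.unit.app (F.obj c)) := inferInstance
    haveI : IsIso (adj'.unit.app (F.obj c) ≫ F.map (adj'.counit.app c)) := by
      rw [h2]; exact IsIso.id _
    exact IsIso.of_isIso_comp_left (adj'.unit.app (F.obj c)) _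
  refine ⟨⟨F.mono_of_mono_map ?_, F.epi_of_epi_map ?_⟩,
          ⟨F.mono_of_mono_map ?_, F.epi_of_epi_map ?_⟩⟩ <;> infer_instance
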